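/- Suppose the magnetic form σ on 𝕋^{2N} is non-resonant in period τ. Then every τ-periodic solution of the magnetic system without potential, i.e. every smooth γ : ℝ → ℝ^{2N} with γ''(t) = −Y_σ(γ(t))·γ'(t), γ(t+τ) − γ(t) ∈ ℤ^{2N} constant, and γ'(t+τ) = γ'(t), is constant. In particular, there are no τ-periodic solutions with V = 0 in any class h ≠ 0. -/

import Mathlib

open Real Filter

noncomputable section

/-- Configuration space ℝ^{2N}: coordinate `(j, s)` is the `s`-th coordinate of the
`j`-th particle, with the Euclidean norm. -/
abbrev Conf (N : ℕ) := EuclideanSpace ℝ (Fin N × Fin 2)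

/-- The plane ℝ² with the Euclidean norm. -/
abbrev Plane := EuclideanSpace ℝ (Fin 2)

/-- The coordinates of the `j`-th particle. -/
def part {N : ℕ} (x : Conf N) (j : Fin N) : Plane := WithLp.toLp 2 (fun s => x (j, s))

/-- The lattice vector in ℝ^{2N} associated to `m ∈ ℤ^{2N}`. -/
def latVec {N : ℕ} (m : Fin N × Fin 2 → ℤ) : Conf N := WithLp.toLp 2 (fun i => (m i : ℝ))

/-- The lattice vector in ℝ² associated to `m ∈ ℤ²`. -/
def latVec2 (m : Fin 2 → ℤ) : Plane := WithLp.toLp 2 (fun s => (m s : ℝ))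

/-- A product magnetic form on 𝕋^{2N}, encoded by smooth ℤ²-periodic functions
`a j : ℝ² → ℝ`. -/
structure Magnetic (N : ℕ) where
  a : Fin N → Plane → ℝ
  smooth : ∀ j, ContDiff ℝ (⊤ : ℕ∞) (a j)
  periodic : ∀ j (x : Plane) (m : Fin 2 → ℤ), a j (x + latVec2 m) = a j x

/-- `σ` is non-resonant in period `τ`. -/
def Magnetic.NonResonant {N : ℕ} (σ : Magnetic N) (τ : ℝ) : Prop :=
  ∀ j : Fin N, ∃ k : ℤ, ∀ x : Plane,
    2 * π * k / τ < σ.a j x ∧ σ.a j x < 2 * π * (k + 1) / τ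

/-- The Lorentz force `Y_σ(x)·v`: block-diagonal action, the `j`-th 2×2 block being
`a_j(x_j)·J₀` with `J₀ = [[0,-1],[1,0]]`. -/
def lorentz {N : ℕ} (a : Fin N → Plane → ℝ) (x v : Conf N) : Conf N :=
  WithLp.toLp 2 (fun i => if i.2 = (0 : Fin 2) then -(a i.1 (part x i.1)) * v (i.1, 1)
           else (a i.1 (part x i.1)) * v (i.1, 0))

/-- A potential: smooth, τ-periodic in time and ℤ^{2N}-periodic in space. -/
structure Potential (N : ℕ) (τ : ℝ) where
  V : ℝ → Conf N → ℝ
  smooth : ContDiff ℝ (⊤ : ℕ∞) (Function.uncurry V)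
  periodic_t : ∀ t x, V (t + τ) x = V t x
  periodic_x : ∀ t (x : Conf N) (m : Fin N × Fin 2 → ℤ), V t (x + latVec m) = V t x

/-- A τ-periodic solution in class `h ∈ ℤ^{2N}` of
`γ'' = −Y_σ(γ)·γ' − ∇V_t(γ)`. -/
def IsSolution {N : ℕ} (σ : Magnetic N) {τ : ℝ} (P : Potential N τ)
    (h : Fin N × Fin 2 → ℤ) (γ : ℝ → Conf N) : Prop :=
  ContDiff ℝ (⊤ : ℕ∞) γ ∧
  (∀ t, deriv (deriv γ) t =
    - lorentz σ.a (γ t) (deriv γ t) - gradient (P.V t) (γ t)) ∧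
  (∀ t, γ (t + τ) = γ t + latVec h) ∧
  (∀ t, deriv γ (t + τ) = deriv γ t)

/-- Two solutions are identified iff they differ by a lattice translation. -/
def SameSol {N : ℕ} (γ₁ γ₂ : ℝ → Conf N) : Prop :=
  ∃ m : Fin N × Fin 2 → ℤ, ∀ t, γ₁ t = γ₂ t + latVec m

/-- Non-degeneracy of a τ-periodic solution: the only τ-periodic solution of the
linearized equation is `ξ ≡ 0`. -/
def NonDegenerate {N : ℕ} (σ : Magnetic N) {τ : ℝ} (P : Potential N τ)
    (γ : ℝ → Conf N) : Prop :=
  ∀ ξ : ℝ → Conf N, ContDiff ℝ (⊤ : ℕ∞) ξ →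
    (∀ t, deriv (deriv ξ) t =
      - fderiv ℝ (fun x => lorentz σ.a x (deriv γ t)) (γ t) (ξ t)
      - lorentz σ.a (γ t) (deriv ξ t)
      - fderiv ℝ (fun x => gradient (P.V t) x) (γ t) (ξ t)) →
    ξ τ = ξ 0 → deriv ξ τ = deriv ξ 0 → ∀ t, ξ t = 0

theorem no_nonconstant_solutions_without_potential
    (N : ℕ) (τ : ℝ) (hτ : 0 < τ) (σ : Magnetic N) (hσ : σ.NonResonant τ)
    (γ : ℝ → Conf N) (hγ : ContDiff ℝ (⊤ : ℕ∞) γ)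
    (heq : ∀ t, deriv (deriv γ) t = - lorentz σ.a (γ t) (deriv γ t))
    (h : Fin N × Fin 2 → ℤ)
    (hlat : ∀ t, γ (t + τ) = γ t + latVec h)
    (hper : ∀ t, deriv γ (t + τ) = deriv γ t) :
    (∀ t : ℝ, γ t = γ 0) ∧ h = 0 := by
  have hγd : Differentiable ℝ γ := hγ.differentiable (by simp)
  have hγ' : ContDiff ℝ (⊤ : ℕ∞) (deriv γ) := (contDiff_infty_iff_deriv.mp hγ).2
  have hγ'd : Differentiable ℝ (deriv γ) := hγ'.differentiable (by simp)
  have hcoord : ∀ (f : ℝ → Conf N), Differentiable ℝ f → ∀ (i : Fin N × Fin 2) (t : ℝ),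
      HasDerivAt (fun t => f t i) (deriv f t i) t := by
    intro f hf i t
    have := (EuclideanSpace.proj i).hasFDerivAt.comp_hasDerivAt t (hf t).hasDerivAt
    exact this
  have key : ∀ (j : Fin N) (t : ℝ), deriv γ t (j, 0) = 0 ∧ deriv γ t (j, 1) = 0 := by
    intro j
    set g : ℝ → ℝ := fun t => σ.a j (part (γ t) j) with hg
    have hpc : Continuous fun t => part (γ t) j := by
      have h1 : (fun t => part (γ t) j)
          = fun t => (PiLp.continuousLinearEquiv 2 ℝ (fun _ : Fin 2 => ℝ)).symm
              (fun s => γ t (j, s)) := by ext; rfl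
      rw [h1]
      exact (PiLp.continuousLinearEquiv 2 ℝ _).symm.continuous.comp
        (continuous_pi fun s => ((EuclideanSpace.proj ((j, s) : Fin N × Fin 2)).continuous).comp
          hγ.continuous)
    have hgc : Continuous g := (σ.smooth j).continuous.comp hpc
    set θ : ℝ → ℝ := fun t => ∫ s in (0:ℝ)..t, g s with hθdef
    have hθ : ∀ t, HasDerivAt θ (g t) t := fun t =>
      intervalIntegral.integral_hasDerivAt_right (hgc.intervalIntegrable 0 t)
        (hgc.stronglyMeasurableAtFilter _ _) hgc.continuousAt
    have hθ0 : θ 0 = 0 := intervalIntegral.integral_same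
    set v1 : ℝ → ℝ := fun t => deriv γ t (j, 0) with hv1def
    set v2 : ℝ → ℝ := fun t => deriv γ t (j, 1) with hv2def
    have hv1 : ∀ t, HasDerivAt v1 (g t * v2 t) t := by
      intro t
      have h0 := hcoord (deriv γ) hγ'd (j, 0) t
      rw [heq t] at h0
      convert h0 using 1
      show g t * v2 t = (- lorentz σ.a (γ t) (deriv γ t)) (j, 0)
      have : (- lorentz σ.a (γ t) (deriv γ t)) (j, 0)
          = - (lorentz σ.a (γ t) (deriv γ t) (j, 0)) := rfl
      rw [this]
      simp [lorentz]
      rfl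
    have hv2 : ∀ t, HasDerivAt v2 (-(g t * v1 t)) t := by
      intro t
      have h0 := hcoord (deriv γ) hγ'd (j, 1) t
      rw [heq t] at h0
      convert h0 using 1
      simp [lorentz]
      rfl
    set u1 : ℝ → ℝ := fun t => v1 t * Real.cos (θ t) - v2 t * Real.sin (θ t) with hu1def
    set u2 : ℝ → ℝ := fun t => v1 t * Real.sin (θ t) + v2 t * Real.cos (θ t) with hu2def
    have hu1 : ∀ t, HasDerivAt u1 0 t := by
      intro t
      have h1 := ((hv1 t).mul (hθ t).cos).sub ((hv2 t).mul (hθ t).sin)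
      refine h1.congr_deriv ?_
      ring
    have hu2 : ∀ t, HasDerivAt u2 0 t := by
      intro t
      have h1 := ((hv1 t).mul (hθ t).sin).add ((hv2 t).mul (hθ t).cos)
      refine h1.congr_deriv ?_
      ring
    have hu1c : ∀ t, u1 t = u1 0 := fun t =>
      is_const_of_deriv_eq_zero (fun x => (hu1 x).differentiableAt)
        (fun x => (hu1 x).deriv) t 0
    have hu2c : ∀ t, u2 t = u2 0 := fun t =>
      is_const_of_deriv_eq_zero (fun x => (hu2 x).differentiableAt)
        (fun x => (hu2 x).deriv) t 0
    have hvτ1 : v1 τ = v1 0 := by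
      have h0 := hper 0
      rw [zero_add] at h0
      simp [hv1def, h0]
    have hvτ2 : v2 τ = v2 0 := by
      have h0 := hper 0
      rw [zero_add] at h0
      simp [hv2def, h0]
    obtain ⟨k, hk⟩ := hσ j
    have hπ : (0:ℝ) < π := Real.pi_pos
    have hτ0 : (τ:ℝ) ≠ 0 := ne_of_gt hτ
    have hθτc : ∫ s in (0:ℝ)..τ, g s = θ τ := rfl
    have hlow : 2 * π * k < θ τ := by
      have hpos : (0:ℝ) < ∫ s in (0:ℝ)..τ, (g s - 2 * π * k / τ) := by
        refine intervalIntegral.intervalIntegral_pos_of_pos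
          ((hgc.sub continuous_const).intervalIntegrable 0 τ) (fun x => ?_) hτ
        have := (hk (part (γ x) j)).1
        simpa [hg] using sub_pos.mpr this
      rw [intervalIntegral.integral_sub (hgc.intervalIntegrable 0 τ)
        (intervalIntegrable_const)] at hpos
      rw [hθτc] at hpos
      simp only [intervalIntegral.integral_const, smul_eq_mul, sub_zero] at hpos
      have heq2 : (τ - 0) * (2 * π * k / τ) = 2 * π * k := by rw [sub_zero]; field_simp
      linarith [hpos, heq2.symm ▸ hpos]
    have hhigh : θ τ < 2 * π * (k + 1) := by
      have hpos : (0:ℝ) < ∫ s in (0:ℝ)..τ, (2 * π * (k + 1) / τ - g s) := by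
        refine intervalIntegral.intervalIntegral_pos_of_pos
          ((continuous_const.sub hgc).intervalIntegrable 0 τ) (fun x => ?_) hτ
        have := (hk (part (γ x) j)).2
        simpa [hg] using sub_pos.mpr this
      rw [intervalIntegral.integral_sub (intervalIntegrable_const)
        (hgc.intervalIntegrable 0 τ)] at hpos
      rw [hθτc] at hpos
      simp only [intervalIntegral.integral_const, smul_eq_mul, sub_zero] at hpos
      have heq2 : (τ - 0) * (2 * π * (k + 1) / τ) = 2 * π * (k + 1) := by rw [sub_zero]; field_simp
      linarith
    have e1 : v1 0 * Real.cos (θ τ) - v2 0 * Real.sin (θ τ) = v1 0 := by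
      have h0 := hu1c τ
      rw [hu1def] at h0
      simp only [hvτ1, hvτ2, hθ0, Real.cos_zero, Real.sin_zero, mul_one, mul_zero,
        sub_zero] at h0
      exact h0
    have e2 : v1 0 * Real.sin (θ τ) + v2 0 * Real.cos (θ τ) = v2 0 := by
      have h0 := hu2c τ
      rw [hu2def] at h0
      simp only [hvτ1, hvτ2, hθ0, Real.cos_zero, Real.sin_zero, mul_one, mul_zero,
        zero_add] at h0
      exact h0
    have hv0 : v1 0 = 0 ∧ v2 0 = 0 := by
      by_contra hc
      have hE : (0:ℝ) < v1 0 ^ 2 + v2 0 ^ 2 := by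
        rcases not_and_or.mp hc with h0 | h0 <;> positivity
      have hcos : Real.cos (θ τ) = 1 := by
        have hh : (v1 0 ^ 2 + v2 0 ^ 2) * Real.cos (θ τ) = (v1 0 ^ 2 + v2 0 ^ 2) * 1 := by
          linear_combination (v1 0) * e1 + (v2 0) * e2
        exact mul_left_cancel₀ (ne_of_gt hE) hh
      obtain ⟨n, hn⟩ := (Real.cos_eq_one_iff _).mp hcos
      have h1 : (k:ℝ) < n := by nlinarith
      have h2 : (n:ℝ) < k + 1 := by nlinarith
      have h1' : (k:ℤ) < n := by exact_mod_cast h1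
      have h2' : (n:ℤ) < k + 1 := by exact_mod_cast h2
      omega
    have hu10 : ∀ t, u1 t = 0 := by
      intro t
      rw [hu1c t, hu1def]
      simp [hθ0, hv0.1, hv0.2]
    have hu20 : ∀ t, u2 t = 0 := by
      intro t
      rw [hu2c t, hu2def]
      simp [hθ0, hv0.1, hv0.2]
    intro t
    have h1 : v1 t * Real.cos (θ t) - v2 t * Real.sin (θ t) = 0 := hu10 t
    have h2 : v1 t * Real.sin (θ t) + v2 t * Real.cos (θ t) = 0 := hu20 t
    have hs := Real.sin_sq_add_cos_sq (θ t)
    constructor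
    · show v1 t = 0
      linear_combination Real.cos (θ t) * h1 + Real.sin (θ t) * h2 - v1 t * hs
    · show v2 t = 0
      linear_combination (-Real.sin (θ t)) * h1 + Real.cos (θ t) * h2 - v2 t * hs
  have key' : ∀ (i : Fin N × Fin 2) (t : ℝ), deriv γ t i = 0 := by
    rintro ⟨j, s⟩ t
    fin_cases s
    · exact (key j t).1
    · exact (key j t).2
  have hconst : ∀ t : ℝ, γ t = γ 0 := by
    intro t
    ext i
    have hf : ∀ x, HasDerivAt (fun t => γ t i) 0 x := by
      intro x
      have := hcoord γ hγd i x
      rwa [key' i x] at this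
    exact is_const_of_deriv_eq_zero (fun x => (hf x).differentiableAt)
      (fun x => (hf x).deriv) t 0
  refine ⟨hconst, ?_⟩
  have h0 := hlat 0
  rw [zero_add, hconst τ] at h0
  have hz : latVec h = 0 := by
    have := h0.symm
    rwa [add_eq_left] at this
  funext i
  have hzi : (h i : ℝ) = 0 := by
    have := congrFun (congrArg (fun (x : Conf N) => (x : (Fin N × Fin 2) → ℝ)) hz) i
    simpa [latVec] using this
  exact_mod_cast hzi
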